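/- Let K be a field of characteristic zero and n ≥ 1. In the planar Cremona group Cr₂(K), let s be the automorphism with s(x) = x + 1, s(y) = y, and a the automorphism with a(x) = x, a(y) = y + xⁿ. Then the subgroup Γₙ generated by s and a is torsion-free: every element of Γₙ of finite order is the identity. -/

import Mathlib

open MvPolynomial

set_option maxHeartbeats 1000000
set_option synthInstance.maxHeartbeats 400000

/-- The rational function field `K(X,Y)`, realized as the fraction field of the polynomial
ring in two variables. Its group of `K`-algebra automorphisms is the planar Cremona
group `Cr₂(K)`. -/
noncomputable abbrev CremonaField (K : Type*) [Field K] : Type _ :=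
  FractionRing (MvPolynomial (Fin 2) K)

/-- The image of the first variable in `K(X,Y)`. -/
noncomputable def genX (K : Type*) [Field K] : CremonaField K :=
  algebraMap (MvPolynomial (Fin 2) K) (CremonaField K) (X 0)

/-- The image of the second variable in `K(X,Y)`. -/
noncomputable def genY (K : Type*) [Field K] : CremonaField K :=
  algebraMap (MvPolynomial (Fin 2) K) (CremonaField K) (X 1)

/-- Torsion-free monoid (Mathlib's former `Monoid.IsTorsionFree`, removed since). -/
def Monoid.IsTorsionFree (G : Type*) [Monoid G] : Prop :=
  ∀ g : G, g ≠ 1 → ¬IsOfFinOrder g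

section Aux

variable {K : Type*} [Field K]

/-- An automorphism fixing both generators is the identity. -/
lemma cremona_ext (σ : CremonaField K ≃ₐ[K] CremonaField K)
    (hx : σ (genX K) = genX K) (hy : σ (genY K) = genY K) : σ = 1 := by
  have hpoly : (σ : CremonaField K →ₐ[K] CremonaField K).comp
      (IsScalarTower.toAlgHom K (MvPolynomial (Fin 2) K) (CremonaField K)) =
      IsScalarTower.toAlgHom K (MvPolynomial (Fin 2) K) (CremonaField K) := by
    apply MvPolynomial.algHom_ext
    intro i
    fin_cases i
    · simpa [genX] using hx
    · simpa [genY] using hy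
  have hring : (σ : CremonaField K →+* CremonaField K) = RingHom.id _ := by
    apply IsLocalization.ringHom_ext (nonZeroDivisors (MvPolynomial (Fin 2) K))
    refine RingHom.ext fun p => ?_
    simpa using DFunLike.congr_fun hpoly p
  ext z
  exact DFunLike.congr_fun hring z

lemma map_adjoin_mem (σ : CremonaField K ≃ₐ[K] CremonaField K) (c : ℤ)
    (hx : σ (genX K) = genX K + (c : CremonaField K)) {q : CremonaField K}
    (hq : q ∈ Algebra.adjoin K {genX K}) : σ q ∈ Algebra.adjoin K {genX K} := by
  have h1 : σ q ∈ (Algebra.adjoin K {genX K}).map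
      (σ : CremonaField K →ₐ[K] CremonaField K) := ⟨q, hq, rfl⟩
  rw [AlgHom.map_adjoin, Set.image_singleton] at h1
  refine Algebra.adjoin_le ?_ h1
  rw [Set.singleton_subset_iff, SetLike.mem_coe, AlgEquiv.coe_algHom, hx]
  exact Subalgebra.add_mem _ (Algebra.self_mem_adjoin_singleton K _) (Subalgebra.intCast_mem _ c)

lemma fix_adjoin (σ : CremonaField K ≃ₐ[K] CremonaField K)
    (hx : σ (genX K) = genX K) {q : CremonaField K}
    (hq : q ∈ Algebra.adjoin K {genX K}) : σ q = q := by
  induction hq using Algebra.adjoin_induction with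
  | mem x hx' =>
    rw [Set.mem_singleton_iff] at hx'
    subst hx'; exact hx
  | algebraMap r => exact σ.commutes r
  | add x y _ _ ihx ihy => rw [map_add, ihx, ihy]
  | mul x y _ _ ihx ihy => rw [map_mul, ihx, ihy]

end Aux

theorem statement2 (K : Type*) [Field K] [CharZero K] (n : ℕ) (hn : 1 ≤ n)
    (s a : CremonaField K ≃ₐ[K] CremonaField K)
    (hsx : s (genX K) = genX K + 1) (hsy : s (genY K) = genY K)
    (hax : a (genX K) = genX K) (hay : a (genY K) = genY K + genX K ^ n) :
    Monoid.IsTorsionFree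
      (Subgroup.closure {s, a} : Subgroup (CremonaField K ≃ₐ[K] CremonaField K)) := by
  haveI : CharZero (CremonaField K) :=
    charZero_of_injective_algebraMap (algebraMap K (CremonaField K)).injective
  rintro ⟨σ, hσ⟩ hg hfin
  apply hg
  -- structure of elements of the closure
  have key : ∃ c : ℤ, ∃ p : CremonaField K, p ∈ Algebra.adjoin K {genX K} ∧
      σ (genX K) = genX K + (c : CremonaField K) ∧ σ (genY K) = genY K + p := by
    refine Subgroup.closure_induction ?_ ?_ ?_ ?_ hσ
    · rintro x (rfl | rfl)
      · exact ⟨1, 0, Subalgebra.zero_mem _, by simpa using hsx, by simpa using hsy⟩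
      · exact ⟨0, genX K ^ n, Subalgebra.pow_mem _ (Algebra.self_mem_adjoin_singleton K _) n,
          by simpa using hax, hay⟩
    · exact ⟨0, 0, Subalgebra.zero_mem _, by simp, by simp⟩
    · rintro f g _ _ ⟨cf, pf, hpf, hfx, hfy⟩ ⟨cg, pg, hpg, hgx, hgy⟩
      refine ⟨cf + cg, pf + f pg, Subalgebra.add_mem _ hpf (map_adjoin_mem f cf hfx hpg), ?_, ?_⟩
      · rw [AlgEquiv.mul_apply, hgx, map_add, hfx, map_intCast]
        push_cast; ring
      · rw [AlgEquiv.mul_apply, hgy, map_add, hfy]; ring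
    · rintro f _ ⟨c, p, hp, hfx, hfy⟩
      have hix : f⁻¹ (genX K) = genX K + ((-c : ℤ) : CremonaField K) := by
        have h2 := congrArg f.symm hfx
        rw [AlgEquiv.symm_apply_apply, map_add, map_intCast] at h2
        show f.symm (genX K) = _
        push_cast
        linear_combination -h2
      refine ⟨-c, -(f⁻¹ p), Subalgebra.neg_mem _ (map_adjoin_mem f⁻¹ (-c) hix hp), hix, ?_⟩
      have h2 := congrArg f.symm hfy
      rw [AlgEquiv.symm_apply_apply, map_add] at h2
      show f.symm (genY K) = genY K + -f.symm p
      linear_combination -h2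
  obtain ⟨c, p, hp, hx, hy⟩ := key
  -- finite order
  set g : (Subgroup.closure {s, a} : Subgroup (CremonaField K ≃ₐ[K] CremonaField K)) := ⟨σ, hσ⟩
  obtain ⟨m, hm0, hm⟩ := hfin.exists_pow_eq_one
  have hσm : σ ^ m = 1 := by
    have : ((g ^ m : _) : CremonaField K ≃ₐ[K] CremonaField K) = 1 := by
      rw [hm]; rfl
    simpa using this
  -- powers on genX
  have hpowx : ∀ k : ℕ, (σ ^ k) (genX K) = genX K + ((k * c : ℤ) : CremonaField K) := by
    intro k
    induction k with
    | zero => simp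
    | succ k ih =>
      rw [pow_succ', AlgEquiv.mul_apply, ih, map_add, map_intCast, hx]
      push_cast; ring
  have hc0 : c = 0 := by
    have := hpowx m
    rw [hσm] at this
    simp only [AlgEquiv.one_apply, left_eq_add, Int.cast_eq_zero] at this
    rcases mul_eq_zero.mp this with h | h
    · exact absurd h (by exact_mod_cast hm0.ne')
    · exact h
  rw [hc0] at hx
  simp only [Int.cast_zero, add_zero] at hx
  -- σ fixes p
  have hfp : σ p = p := fix_adjoin σ hx hp
  have hpowy : ∀ k : ℕ, (σ ^ k) (genY K) = genY K + (k : CremonaField K) * p := by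
    intro k
    induction k with
    | zero => simp
    | succ k ih =>
      rw [pow_succ', AlgEquiv.mul_apply, ih, map_add, map_mul, map_natCast, hfp, hy]
      push_cast; ring
  have hp0 : p = 0 := by
    have := hpowy m
    rw [hσm] at this
    simp only [AlgEquiv.one_apply, left_eq_add, mul_eq_zero] at this
    rcases this with h | h
    · exact absurd h (by exact_mod_cast hm0.ne')
    · exact h
  rw [hp0, add_zero] at hy
  exact Subtype.ext (cremona_ext σ hx hy)
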